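/- arXiv:1505.03760 — 2 statements merged into one kernel-verified Lean document; each statement's English description precedes it below -/
import Mathlib

section
/- Joint cumulant bound via centered moments: for bounded complex random variables \zeta, X_1, ..., X_k there exists a constant C_k depending only on k such that |\kappa(\zeta, X_1, ..., X_k)| \le C_k \sqrt{E|\zeta|^2} \prod_{i=1}^k (E|X_i - E X_i|^{2k})^{1/(2k)}, where \kappa denotes the joint cumulant of k+1 random variables. -/
open MeasureTheory
open scoped Classical

/-- The joint cumulant of `n` complex random variables, via the partition
(Möbius) expansion: `κ(X₁,…,Xₙ) = ∑_{π} (-1)^{|π|-1} (|π|-1)! ∏_{B ∈ π} E[∏_{i∈B} Xᵢ]`,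
where `π` ranges over set partitions of `{1,…,n}`. -/
noncomputable def jointCumulant {Ω : Type*} [MeasurableSpace Ω] (μ : Measure Ω)
    (n : ℕ) (X : Fin n → Ω → ℂ) : ℂ :=
  ∑ P ∈ Finset.univ.filter
      (fun P : Finset (Finset (Fin n)) =>
        ∅ ∉ P ∧ (∀ i : Fin n, ∃ B ∈ P, i ∈ B) ∧
          ∀ A ∈ P, ∀ B ∈ P, A ≠ B → Disjoint A B),
    (-1 : ℂ) ^ (P.card - 1) * (Nat.factorial (P.card - 1) : ℂ) *
      ∏ B ∈ P, ∫ ω, ∏ i ∈ B, X i ω ∂μ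

noncomputable def parts (n : ℕ) : Finset (Finset (Finset (Fin n))) :=
  Finset.univ.filter
      (fun P : Finset (Finset (Fin n)) =>
        ∅ ∉ P ∧ (∀ i : Fin n, ∃ B ∈ P, i ∈ B) ∧
          ∀ A ∈ P, ∀ B ∈ P, A ≠ B → Disjoint A B)

variable {n : ℕ}

lemma mem_parts {P : Finset (Finset (Fin n))} :
    P ∈ parts n ↔ ∅ ∉ P ∧ (∀ i : Fin n, ∃ B ∈ P, i ∈ B) ∧
      ∀ A ∈ P, ∀ B ∈ P, A ≠ B → Disjoint A B := by
  simp [parts]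

lemma parts_unique {P : Finset (Finset (Fin n))} (hP : P ∈ parts n)
    {A B : Finset (Fin n)} (hA : A ∈ P) (hB : B ∈ P) {i : Fin n}
    (hiA : i ∈ A) (hiB : i ∈ B) : A = B := by
  by_contra hne
  exact Finset.disjoint_left.1 ((mem_parts.1 hP).2.2 A hA B hB hne) hiA hiB

lemma key_identity (hn : 2 ≤ n) (j : Fin n) (h : Finset (Fin n) → ℂ)
    (h0 : h ∅ = 1) :
    ∑ P ∈ parts n, (-1 : ℂ) ^ (P.card - 1) * (Nat.factorial (P.card - 1) : ℂ) *
      ∏ B ∈ P, h (B.erase j) = 0 := by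
  classical
  set F : Finset (Finset (Fin n)) → ℂ := fun P =>
    (-1 : ℂ) ^ (P.card - 1) * (Nat.factorial (P.card - 1) : ℂ) *
      ∏ B ∈ P, h (B.erase j) with hF
  set Φ : Finset (Finset (Fin n)) → Finset (Finset (Fin n)) := fun P =>
    (P.image (fun B => B.erase j)).erase ∅ with hΦ
  rw [← Finset.sum_fiberwise_of_maps_to
    (t := (parts n).image Φ) (fun P hP => Finset.mem_image_of_mem Φ hP) F]
  refine Finset.sum_eq_zero (fun σ hσ => ?_)
  obtain ⟨P₀, hP₀, hΦP₀⟩ := Finset.mem_image.1 hσ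
  obtain ⟨hP₀e, hP₀c, hP₀d⟩ := mem_parts.1 hP₀
  -- properties of σ
  have hσe : ∅ ∉ σ := by rw [← hΦP₀]; exact Finset.notMem_erase _ _
  have hσj : ∀ B ∈ σ, j ∉ B := by
    intro B hB
    rw [← hΦP₀] at hB
    obtain ⟨B', _, rfl⟩ := Finset.mem_image.1 (Finset.mem_of_mem_erase hB)
    exact Finset.notMem_erase _ _
  have hσd : ∀ A ∈ σ, ∀ B ∈ σ, A ≠ B → Disjoint A B := by
    intro A hA B hB hne
    rw [← hΦP₀] at hA hB
    obtain ⟨A', hA', rfl⟩ := Finset.mem_image.1 (Finset.mem_of_mem_erase hA)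
    obtain ⟨B', hB', rfl⟩ := Finset.mem_image.1 (Finset.mem_of_mem_erase hB)
    have hne' : A' ≠ B' := fun e => hne (by rw [e])
    exact Finset.disjoint_of_subset_left (Finset.erase_subset _ _)
      (Finset.disjoint_of_subset_right (Finset.erase_subset _ _) (hP₀d A' hA' B' hB' hne'))
  have hσc : ∀ i : Fin n, i ≠ j → ∃ B ∈ σ, i ∈ B := by
    intro i hij
    obtain ⟨B, hB, hiB⟩ := hP₀c i
    refine ⟨B.erase j, ?_, Finset.mem_erase.2 ⟨hij, hiB⟩⟩
    rw [← hΦP₀]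
    refine Finset.mem_erase.2 ⟨?_, Finset.mem_image_of_mem _ hB⟩
    intro e
    have hmm := Finset.mem_erase.2 ⟨hij, hiB⟩
    rw [e] at hmm
    simp at hmm
  have hσne : σ.Nonempty := by
    have : ∃ i : Fin n, i ≠ j := by
      have : Nontrivial (Fin n) := Fin.nontrivial_iff_two_le.2 hn
      exact exists_ne j
    obtain ⟨i, hij⟩ := this
    obtain ⟨B, hB, _⟩ := hσc i hij
    exact ⟨B, hB⟩
  -- the fiber
  have himid : ∀ (s : Finset (Finset (Fin n))), (∀ B ∈ s, j ∉ B) →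
      s.image (fun B => B.erase j) = s := by
    intro s hs
    ext A
    simp only [Finset.mem_image]
    constructor
    · rintro ⟨B, hB, rfl⟩; rwa [Finset.erase_eq_of_notMem (hs B hB)]
    · intro hA; exact ⟨A, hA, Finset.erase_eq_of_notMem (hs A hA)⟩
  have hσim : σ.image (fun B => B.erase j) = σ := himid σ hσj
  have hjb : ∀ B₁ ∈ σ, insert j B₁ ∉ σ.erase B₁ := by
    intro B₁ _ hmem
    exact hσj _ (Finset.mem_of_mem_erase hmem) (Finset.mem_insert_self j B₁)
  have hfib : (parts n).filter (fun P => Φ P = σ) =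
      insert (insert {j} σ) (σ.image (fun B => insert (insert j B) (σ.erase B))) := by
    ext P
    simp only [Finset.mem_filter, Finset.mem_insert, Finset.mem_image]
    constructor
    · rintro ⟨hP, hΦP⟩
      obtain ⟨hPe, hPc, hPd⟩ := mem_parts.1 hP
      obtain ⟨B₀, hB₀, hjB₀⟩ := hPc j
      have huniq : ∀ B ∈ P, B ≠ B₀ → j ∉ B := by
        intro B hB hne hjB
        exact Finset.disjoint_left.1 (hPd B hB B₀ hB₀ hne) hjB hjB₀
      have himg : P.image (fun B => B.erase j) = insert (B₀.erase j) (P.erase B₀) := by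
        conv_lhs => rw [← Finset.insert_erase hB₀]
        rw [Finset.image_insert, himid _ (fun B hB =>
          huniq B (Finset.mem_of_mem_erase hB) (Finset.ne_of_mem_erase hB))]
      by_cases hB₀j : B₀ = {j}
      · left
        have : Φ P = P.erase B₀ := by
          rw [hΦ]; dsimp only
          rw [himg, hB₀j, Finset.erase_singleton, Finset.erase_insert (by
            exact fun h => hPe (Finset.mem_of_mem_erase h))]
        rw [this] at hΦP
        rw [← hΦP, ← hB₀j, Finset.insert_erase hB₀]
      · have hB₁ne : B₀.erase j ≠ ∅ := by
          intro e
          rcases (Finset.erase_eq_empty_iff B₀ j).1 e with e' | e'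
          · exact hPe (e' ▸ hB₀)
          · exact hB₀j e'
        have : Φ P = insert (B₀.erase j) (P.erase B₀) := by
          rw [hΦ]; dsimp only
          rw [himg, Finset.erase_eq_of_notMem]
          simp only [Finset.mem_insert]
          rintro (e | e)
          · exact hB₁ne e.symm
          · exact hPe (Finset.mem_of_mem_erase e)
        rw [this] at hΦP
        right
        refine ⟨B₀.erase j, ?_, ?_⟩
        · rw [← hΦP]; exact Finset.mem_insert_self _ _
        · have hB₁notP : B₀.erase j ∉ P.erase B₀ := by
            intro hmem
            obtain ⟨i, hi⟩ := Finset.nonempty_iff_ne_empty.2 hB₁ne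
            exact Finset.disjoint_left.1
              (hPd _ (Finset.mem_of_mem_erase hmem) B₀ hB₀
                (Finset.ne_of_mem_erase hmem)) hi (Finset.mem_of_mem_erase hi)
          rw [← hΦP, Finset.erase_insert hB₁notP,
            Finset.insert_erase hjB₀, Finset.insert_erase hB₀]
    · rintro (rfl | ⟨B₁, hB₁, rfl⟩)
      · have hjσ : {j} ∉ σ := fun hmem => hσj _ hmem (Finset.mem_singleton_self j)
        constructor
        · refine mem_parts.2 ⟨?_, ?_, ?_⟩
          · simp only [Finset.mem_insert]
            rintro (e | e)
            · exact Finset.singleton_ne_empty j e.symm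
            · exact hσe e
          · intro i
            by_cases hij : i = j
            · exact ⟨{j}, Finset.mem_insert_self _ _, by simp [hij]⟩
            · obtain ⟨B, hB, hiB⟩ := hσc i hij
              exact ⟨B, Finset.mem_insert_of_mem hB, hiB⟩
          · intro A hA B hB hne
            rcases Finset.mem_insert.1 hA with rfl | hA <;>
              rcases Finset.mem_insert.1 hB with rfl | hB
            · exact absurd rfl hne
            · exact Finset.disjoint_singleton_left.2 (hσj B hB)
            · exact (Finset.disjoint_singleton_left.2 (hσj A hA)).symm
            · exact hσd A hA B hB hne
        · rw [hΦ]; dsimp only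
          rw [Finset.image_insert, Finset.erase_singleton, hσim,
            Finset.erase_insert hσe]
      · have hB₁e : B₁ ≠ ∅ := fun e => hσe (e ▸ hB₁)
        constructor
        · refine mem_parts.2 ⟨?_, ?_, ?_⟩
          · simp only [Finset.mem_insert]
            rintro (e | e)
            · exact Finset.insert_ne_empty j B₁ e.symm
            · exact hσe (Finset.mem_of_mem_erase e)
          · intro i
            by_cases hij : i = j
            · exact ⟨insert j B₁, Finset.mem_insert_self _ _, by simp [hij]⟩
            · obtain ⟨B, hB, hiB⟩ := hσc i hij
              by_cases hBB₁ : B = B₁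
              · exact ⟨insert j B₁, Finset.mem_insert_self _ _,
                  Finset.mem_insert_of_mem (hBB₁ ▸ hiB)⟩
              · exact ⟨B, Finset.mem_insert_of_mem (Finset.mem_erase.2 ⟨hBB₁, hB⟩), hiB⟩
          · intro A hA B hB hne
            rcases Finset.mem_insert.1 hA with rfl | hA <;>
              rcases Finset.mem_insert.1 hB with rfl | hB
            · exact absurd rfl hne
            · refine Finset.disjoint_insert_left.2
                ⟨hσj B (Finset.mem_of_mem_erase hB), ?_⟩
              exact hσd B₁ hB₁ B (Finset.mem_of_mem_erase hB)
                (fun e => (Finset.ne_of_mem_erase hB) e.symm)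
            · refine (Finset.disjoint_insert_left.2
                ⟨hσj A (Finset.mem_of_mem_erase hA), ?_⟩).symm
              exact hσd B₁ hB₁ A (Finset.mem_of_mem_erase hA)
                (fun e => (Finset.ne_of_mem_erase hA) e.symm)
            · exact hσd A (Finset.mem_of_mem_erase hA) B (Finset.mem_of_mem_erase hB) hne
        · rw [hΦ]; dsimp only
          rw [Finset.image_insert, Finset.erase_insert (hσj B₁ hB₁),
            himid _ (fun B hB => hσj B (Finset.mem_of_mem_erase hB)),
            Finset.insert_erase hB₁, Finset.erase_eq_of_notMem hσe]
  rw [hfib]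
  -- now compute the sum
  have hjσ : {j} ∉ σ := fun hmem => hσj _ hmem (Finset.mem_singleton_self j)
  have hnotim : insert {j} σ ∉ σ.image (fun B => insert (insert j B) (σ.erase B)) := by
    intro hmem
    obtain ⟨B₁, hB₁, he⟩ := Finset.mem_image.1 hmem
    have : ({j} : Finset (Fin n)) ∈ insert (insert j B₁) (σ.erase B₁) := by
      rw [he]; exact Finset.mem_insert_self _ _
    rcases Finset.mem_insert.1 this with e | e
    · obtain ⟨i, hi⟩ := Finset.nonempty_iff_ne_empty.2 (fun e' => hσe (e' ▸ hB₁))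
      have hij : i ≠ j := fun e' => hσj B₁ hB₁ (e' ▸ hi)
      have : i ∈ ({j} : Finset (Fin n)) := e ▸ Finset.mem_insert_of_mem hi
      exact hij (Finset.mem_singleton.1 this)
    · exact hσj _ (Finset.mem_of_mem_erase e) (Finset.mem_singleton_self j)
  rw [Finset.sum_insert hnotim, Finset.sum_image (by
    intro B₁ hB₁ B₂ hB₂ he
    dsimp only at he
    have : insert j B₁ ∈ insert (insert j B₂) (σ.erase B₂) := by
      rw [← he]; exact Finset.mem_insert_self _ _
    rcases Finset.mem_insert.1 this with e | e
    · have := congrArg (fun s => Finset.erase s j) e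
      simpa [Finset.erase_insert (hσj B₁ hB₁), Finset.erase_insert (hσj B₂ hB₂)] using this
    · exact (hσj _ (Finset.mem_of_mem_erase e) (Finset.mem_insert_self j B₁)).elim )]
  -- F values
  obtain ⟨m, hm⟩ : ∃ m, σ.card = m + 1 :=
    ⟨σ.card - 1, (Nat.succ_pred_eq_of_pos (Finset.card_pos.2 hσne)).symm⟩
  have hG1 : F (insert {j} σ) =
      (-1 : ℂ) ^ (m + 1) * ((m+1).factorial : ℂ) * ∏ B ∈ σ, h B := by
    rw [hF]; dsimp only
    rw [Finset.card_insert_of_notMem hjσ, hm]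
    simp only [Nat.add_sub_cancel]
    congr 1
    rw [Finset.prod_insert hjσ, Finset.erase_singleton, h0, one_mul]
    exact Finset.prod_congr rfl (fun B hB => by rw [Finset.erase_eq_of_notMem (hσj B hB)])
  have hG2 : ∀ B₁ ∈ σ, F (insert (insert j B₁) (σ.erase B₁)) =
      (-1 : ℂ) ^ m * (m.factorial : ℂ) * ∏ B ∈ σ, h B := by
    intro B₁ hB₁
    rw [hF]; dsimp only
    rw [Finset.card_insert_of_notMem (hjb B₁ hB₁), Finset.card_erase_of_mem hB₁, hm]
    simp only [Nat.add_sub_cancel]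
    congr 1
    rw [Finset.prod_insert (hjb B₁ hB₁), Finset.erase_insert (hσj B₁ hB₁)]
    rw [Finset.prod_congr rfl (fun B hB => by
      rw [Finset.erase_eq_of_notMem (hσj B (Finset.mem_of_mem_erase hB))])]
    exact Finset.mul_prod_erase σ h hB₁
  rw [hG1, Finset.sum_congr rfl hG2, Finset.sum_const, hm]
  simp only [nsmul_eq_mul, Nat.factorial_succ, pow_succ]
  push_cast
  ring

open scoped ENNReal NNReal

section analytic

variable {Ω : Type*} [MeasurableSpace Ω] {μ : Measure Ω}

lemma jointCumulant_eq (μ : Measure Ω) (n : ℕ) (X : Fin n → Ω → ℂ) :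
    jointCumulant μ n X = ∑ P ∈ parts n,
      (-1 : ℂ) ^ (P.card - 1) * (Nat.factorial (P.card - 1) : ℂ) *
        ∏ B ∈ P, ∫ ω, ∏ i ∈ B, X i ω ∂μ := rfl

lemma integrable_finprod [IsFiniteMeasure μ] {ι : Type*} [DecidableEq ι] (B : Finset ι)
    (X : ι → Ω → ℂ) (hm : ∀ i, Measurable (X i))
    (hb : ∀ i, ∃ M, ∀ ω, ‖X i ω‖ ≤ M) :
    Integrable (fun ω => ∏ i ∈ B, X i ω) μ := by
  choose M hM using hb
  refine Integrable.mono' (integrable_const (∏ i ∈ B, max (M i) 0)) ?_ ?_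
  · exact (Finset.measurable_prod B (fun i _ => hm i)).aestronglyMeasurable
  · refine Filter.Eventually.of_forall (fun ω => ?_)
    rw [norm_prod]
    refine Finset.prod_le_prod (fun i _ => norm_nonneg _) (fun i _ => ?_)
    exact le_trans (hM i ω) (le_max_left _ _)

lemma jointCumulant_update [IsProbabilityMeasure μ] {n : ℕ} (hn : 2 ≤ n)
    (X : Fin n → Ω → ℂ) (hm : ∀ i, Measurable (X i))
    (hb : ∀ i, ∃ M, ∀ ω, ‖X i ω‖ ≤ M) (j : Fin n) (c : ℂ) :
    jointCumulant μ n (Function.update X j (fun ω => X j ω + c)) = jointCumulant μ n X := by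
  classical
  set X' := Function.update X j (fun ω => X j ω + c) with hX'
  rw [jointCumulant_eq, jointCumulant_eq]
  have key := key_identity (n := n) hn j (fun A => ∫ ω, ∏ i ∈ A, X i ω ∂μ) (by
    simp only [Finset.prod_empty]
    rw [integral_const]
    simp)
  have hterm : ∀ P ∈ parts n,
      (-1:ℂ)^(P.card-1) * ((P.card-1).factorial : ℂ) * ∏ B ∈ P, ∫ ω, ∏ i ∈ B, X' i ω ∂μ
      = (-1:ℂ)^(P.card-1) * ((P.card-1).factorial : ℂ) * ∏ B ∈ P, ∫ ω, ∏ i ∈ B, X i ω ∂μ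
        + c * ((-1:ℂ)^(P.card-1) * ((P.card-1).factorial : ℂ) *
            ∏ B ∈ P, (fun A => ∫ ω, ∏ i ∈ A, X i ω ∂μ) (B.erase j)) := by
    intro P hP
    obtain ⟨hPe, hPc, hPd⟩ := mem_parts.1 hP
    obtain ⟨B₀, hB₀, hjB₀⟩ := hPc j
    have huniq : ∀ B ∈ P, B ≠ B₀ → j ∉ B := fun B hB hne hjB =>
      Finset.disjoint_left.1 (hPd B hB B₀ hB₀ hne) hjB hjB₀
    have heq1 : ∀ B ∈ P.erase B₀,
        (∫ ω, ∏ i ∈ B, X' i ω ∂μ) = ∫ ω, ∏ i ∈ B, X i ω ∂μ := by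
      intro B hB
      refine congrArg _ (funext fun ω => Finset.prod_congr rfl fun i hi => ?_)
      have hij : i ≠ j := fun e => huniq B (Finset.mem_of_mem_erase hB)
        (Finset.ne_of_mem_erase hB) (by rwa [e] at hi)
      rw [hX', Function.update_of_ne hij]
    have heq2 : ∀ B ∈ P.erase B₀,
        (∫ ω, ∏ i ∈ B.erase j, X i ω ∂μ) = ∫ ω, ∏ i ∈ B, X i ω ∂μ := by
      intro B hB
      rw [Finset.erase_eq_of_notMem (huniq B (Finset.mem_of_mem_erase hB)
        (Finset.ne_of_mem_erase hB))]
    have heq0 : (∫ ω, ∏ i ∈ B₀, X' i ω ∂μ)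
        = (∫ ω, ∏ i ∈ B₀, X i ω ∂μ) + c * ∫ ω, ∏ i ∈ B₀.erase j, X i ω ∂μ := by
      have hpt : ∀ ω, ∏ i ∈ B₀, X' i ω
          = ∏ i ∈ B₀, X i ω + c * ∏ i ∈ B₀.erase j, X i ω := by
        intro ω
        rw [← Finset.mul_prod_erase B₀ (fun i => X' i ω) hjB₀,
          ← Finset.mul_prod_erase B₀ (fun i => X i ω) hjB₀,
          Finset.prod_congr rfl (fun i hi => by
            rw [hX', Function.update_of_ne (Finset.mem_erase.1 hi).1])]
        rw [hX', Function.update_self]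
        ring
      rw [integral_congr_ae (Filter.Eventually.of_forall hpt),
        integral_add (integrable_finprod B₀ X hm hb)
          ((integrable_finprod (B₀.erase j) X hm hb).const_mul c),
        integral_const_mul]
    have hprod : ∏ B ∈ P, ∫ ω, ∏ i ∈ B, X' i ω ∂μ
        = ∏ B ∈ P, ∫ ω, ∏ i ∈ B, X i ω ∂μ
          + c * ∏ B ∈ P, ∫ ω, ∏ i ∈ B.erase j, X i ω ∂μ := by
      rw [← Finset.mul_prod_erase P (fun B => ∫ ω, ∏ i ∈ B, X' i ω ∂μ) hB₀,
        ← Finset.mul_prod_erase P (fun B => ∫ ω, ∏ i ∈ B, X i ω ∂μ) hB₀,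
        ← Finset.mul_prod_erase P (fun B => ∫ ω, ∏ i ∈ B.erase j, X i ω ∂μ) hB₀,
        Finset.prod_congr rfl heq1, Finset.prod_congr rfl heq2, heq0]
      ring
    rw [hprod]
    ring
  rw [Finset.sum_congr rfl hterm, Finset.sum_add_distrib, ← Finset.mul_sum, key,
    mul_zero, add_zero]

lemma jointCumulant_add_consts [IsProbabilityMeasure μ] {n : ℕ} (hn : 2 ≤ n)
    (X : Fin n → Ω → ℂ) (hm : ∀ i, Measurable (X i))
    (hb : ∀ i, ∃ M, ∀ ω, ‖X i ω‖ ≤ M) (c : Fin n → ℂ) :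
    jointCumulant μ n (fun i ω => X i ω + c i) = jointCumulant μ n X := by
  classical
  have main : ∀ s : Finset (Fin n),
      jointCumulant μ n (fun i ω => X i ω + (if i ∈ s then c i else 0))
        = jointCumulant μ n X := by
    intro s
    induction s using Finset.induction_on with
    | empty => simp
    | @insert a s ha IH =>
      set Y : Fin n → Ω → ℂ := fun i ω => X i ω + (if i ∈ s then c i else 0) with hY
      have hYm : ∀ i, Measurable (Y i) := fun i => (hm i).add_const _
      have hYb : ∀ i, ∃ M, ∀ ω, ‖Y i ω‖ ≤ M := by
        intro i
        obtain ⟨M, hM⟩ := hb i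
        exact ⟨M + ‖if i ∈ s then c i else 0‖, fun ω =>
          le_trans (norm_add_le _ _) (by gcongr; exact hM ω)⟩
      have hfun : (fun i ω => X i ω + (if i ∈ insert a s then c i else 0))
          = Function.update Y a (fun ω => Y a ω + c a) := by
        funext i
        by_cases hia : i = a
        · subst hia
          rw [Function.update_self, hY]
          simp [ha]
        · rw [Function.update_of_ne hia, hY]
          simp [Finset.mem_insert, hia]
      rw [hfun, jointCumulant_update hn Y hYm hYb a (c a), IH]
  have := main Finset.univ
  simpa using this

lemma abs_integral_prod_le [IsProbabilityMeasure μ] {ι : Type*} (B : Finset ι)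
    (Z : ι → Ω → ℂ) (hm : ∀ i, Measurable (Z i))
    (hb : ∀ i, ∃ M, ∀ ω, ‖Z i ω‖ ≤ M)
    (p : ι → ℝ) (hp : ∀ i, 1 ≤ p i) (hsum : ∑ i ∈ B, (p i)⁻¹ ≤ 1) :
    ‖∫ ω, ∏ i ∈ B, Z i ω ∂μ‖
      ≤ ∏ i ∈ B, (∫ ω, ‖Z i ω‖ ^ (p i) ∂μ) ^ (p i)⁻¹ := by
  classical
  have hppos : ∀ i, (0:ℝ) < p i := fun i => lt_of_lt_of_le one_pos (hp i)
  set f : ι → Ω → ℝ≥0∞ := fun i ω => (‖Z i ω‖₊ : ℝ≥0∞) with hf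
  have hfm : ∀ i, Measurable (f i) := fun i => (hm i).nnnorm.coe_nnreal_ennreal
  set s' : Finset (Option ι) := insert none (B.image some) with hs'
  set g : Option ι → Ω → ℝ≥0∞ :=
    fun o => o.elim (fun _ => 1) (fun i ω => f i ω ^ p i) with hg
  set q : Option ι → ℝ := fun o => o.elim (1 - ∑ i ∈ B, (p i)⁻¹) (fun i => (p i)⁻¹) with hq
  have hnone : (none : Option ι) ∉ B.image some := by simp
  have hinj : ∀ a ∈ B, ∀ b ∈ B, some a = some b → a = b := fun a _ b _ h =>
    Option.some_injective ι h
  have hq1 : ∑ o ∈ s', q o = 1 := by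
    rw [hs', Finset.sum_insert hnone, Finset.sum_image hinj]
    simp [hq]
  have hqnn : ∀ o ∈ s', 0 ≤ q o := by
    rintro (_|i) _
    · simpa [hq] using hsum
    · exact le_of_lt (inv_pos.2 (hppos i))
  have hgm : ∀ o ∈ s', AEMeasurable (g o) μ := by
    rintro (_|i) _
    · exact aemeasurable_const
    · exact ((hfm i).pow_const (p i)).aemeasurable
  have hH := ENNReal.lintegral_prod_norm_pow_le s' hgm hq1 hqnn
  have hL : ∀ ω, ∏ o ∈ s', g o ω ^ q o = ∏ i ∈ B, f i ω := by
    intro ω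
    rw [hs', Finset.prod_insert hnone, Finset.prod_image hinj]
    simp only [hg, hq, Option.elim]
    rw [ENNReal.one_rpow, one_mul]
    refine Finset.prod_congr rfl (fun i _ => ?_)
    rw [← ENNReal.rpow_mul, mul_inv_cancel₀ (ne_of_gt (hppos i)), ENNReal.rpow_one]
  have hR : ∏ o ∈ s', (∫⁻ ω, g o ω ∂μ) ^ q o
      = ∏ i ∈ B, (∫⁻ ω, f i ω ^ p i ∂μ) ^ (p i)⁻¹ := by
    rw [hs', Finset.prod_insert hnone, Finset.prod_image hinj]
    simp only [hg, hq, Option.elim]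
    rw [lintegral_one, measure_univ, ENNReal.one_rpow, one_mul]
  rw [hR, lintegral_congr hL] at hH
  -- finiteness
  have hfin : ∀ i, (∫⁻ ω, f i ω ^ p i ∂μ) ≠ ⊤ := by
    intro i
    obtain ⟨M, hM⟩ := hb i
    have hb' : ∀ ω, f i ω ^ p i ≤ ENNReal.ofReal M ^ p i := by
      intro ω
      refine ENNReal.rpow_le_rpow ?_ (le_of_lt (hppos i))
      have hfe : f i ω = ENNReal.ofReal ‖Z i ω‖ := (ofReal_norm _).symm
      rw [hfe]
      exact ENNReal.ofReal_le_ofReal (by exact hM ω)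
    refine ne_top_of_le_ne_top (b := ENNReal.ofReal M ^ p i)
      (ENNReal.rpow_ne_top_of_nonneg (le_of_lt (hppos i)) ENNReal.ofReal_ne_top) ?_
    calc ∫⁻ ω, f i ω ^ p i ∂μ ≤ ∫⁻ _, ENNReal.ofReal M ^ p i ∂μ := lintegral_mono hb'
      _ = ENNReal.ofReal M ^ p i := by rw [lintegral_const, measure_univ, mul_one]
  -- pass to real integrals
  have h1 : ‖∫ ω, ∏ i ∈ B, Z i ω ∂μ‖ ≤ ∫ ω, ∏ i ∈ B, ‖Z i ω‖ ∂μ := by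
    refine le_trans (norm_integral_le_integral_norm _) (le_of_eq ?_)
    exact integral_congr_ae (Filter.Eventually.of_forall fun ω => norm_prod _ _)
  have h2 : ∫ ω, ∏ i ∈ B, ‖Z i ω‖ ∂μ = (∫⁻ ω, ∏ i ∈ B, f i ω ∂μ).toReal := by
    rw [integral_eq_lintegral_of_nonneg_ae
      (Filter.Eventually.of_forall fun ω => Finset.prod_nonneg fun i _ => norm_nonneg _)
      (Finset.measurable_prod B fun i _ => (hm i).norm).aestronglyMeasurable]
    congr 1
    refine lintegral_congr fun ω => ?_
    rw [ENNReal.ofReal_prod_of_nonneg (fun i _ => norm_nonneg _)]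
    exact Finset.prod_congr rfl fun i _ => ofReal_norm _
  have h3 : (∫⁻ ω, ∏ i ∈ B, f i ω ∂μ).toReal
      ≤ (∏ i ∈ B, (∫⁻ ω, f i ω ^ p i ∂μ) ^ (p i)⁻¹).toReal := by
    refine ENNReal.toReal_mono (ENNReal.prod_ne_top fun i _ =>
      ENNReal.rpow_ne_top_of_nonneg (le_of_lt (inv_pos.2 (hppos i))) (hfin i)) hH
  have h4 : (∏ i ∈ B, (∫⁻ ω, f i ω ^ p i ∂μ) ^ (p i)⁻¹).toReal
      = ∏ i ∈ B, (∫ ω, ‖Z i ω‖ ^ (p i) ∂μ) ^ (p i)⁻¹ := by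
    rw [ENNReal.toReal_prod]
    refine Finset.prod_congr rfl fun i _ => ?_
    rw [← ENNReal.toReal_rpow]
    have hInt : ∫ ω, ‖Z i ω‖ ^ (p i) ∂μ
        = (∫⁻ ω, ENNReal.ofReal (‖Z i ω‖ ^ (p i)) ∂μ).toReal :=
      integral_eq_lintegral_of_nonneg_ae
        (Filter.Eventually.of_forall fun ω => Real.rpow_nonneg (norm_nonneg _) _)
        (((hm i).norm.pow_const (p i)).aestronglyMeasurable)
    rw [hInt]
    congr 1
    congr 1
    refine lintegral_congr fun ω => ?_
    rw [← ENNReal.ofReal_rpow_of_nonneg (norm_nonneg (Z i ω)) (le_of_lt (hppos i))]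
    congr 1
    exact (ofReal_norm _).symm
  calc ‖∫ ω, ∏ i ∈ B, Z i ω ∂μ‖ ≤ ∫ ω, ∏ i ∈ B, ‖Z i ω‖ ∂μ := h1
    _ = (∫⁻ ω, ∏ i ∈ B, f i ω ∂μ).toReal := h2
    _ ≤ (∏ i ∈ B, (∫⁻ ω, f i ω ^ p i ∂μ) ^ (p i)⁻¹).toReal := h3
    _ = ∏ i ∈ B, (∫ ω, ‖Z i ω‖ ^ (p i) ∂μ) ^ (p i)⁻¹ := h4

end analytic

set_option maxHeartbeats 2000000 in
/-- Joint cumulant bound via centered moments: for each `k` there is a constant `C_k`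
such that for bounded random variables `ζ, X₁, …, X_k`,
`|κ(ζ, X₁, …, X_k)| ≤ C_k √(E|ζ|²) ∏ᵢ (E|Xᵢ - EXᵢ|^{2k})^{1/(2k)}`. -/
theorem jointCumulant_bound (k : ℕ) (hk : 0 < k) :
    ∃ C : ℝ, 0 < C ∧
      ∀ (Ω : Type) (_ : MeasurableSpace Ω) (μ : Measure Ω),
        IsProbabilityMeasure μ →
        ∀ (ζ : Ω → ℂ) (X : Fin k → Ω → ℂ),
          Measurable ζ → (∀ i, Measurable (X i)) →
          (∃ M, ∀ ω, ‖ζ ω‖ ≤ M) →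
          (∃ M, ∀ i ω, ‖X i ω‖ ≤ M) →
          ‖jointCumulant μ (k + 1) (Fin.cons ζ X)‖ ≤
            C * Real.sqrt (∫ ω, ‖ζ ω‖ ^ 2 ∂μ) *
              ∏ i, (∫ ω, ‖X i ω - ∫ ω', X i ω' ∂μ‖ ^ (2 * k) ∂μ) ^
                ((2 * k : ℝ))⁻¹ := by
  classical
  refine ⟨((parts (k+1)).card * (k.factorial) : ℝ) + 1,
    add_pos_of_nonneg_of_pos
      (mul_nonneg (Nat.cast_nonneg _) (Nat.cast_nonneg _)) one_pos, ?_⟩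
  intro Ω mΩ μ hμ ζ X hζm hXm hζb hXb
  obtain ⟨Mζ, hMζ⟩ := hζb
  obtain ⟨MX, hMX⟩ := hXb
  set m : Fin k → ℂ := fun i => ∫ ω', X i ω' ∂μ with hm
  set Y : Fin k → Ω → ℂ := fun i ω => X i ω - m i with hY
  set Z : Fin (k+1) → Ω → ℂ := Fin.cons ζ Y with hZ
  have hz0 : Z 0 = ζ := by rw [hZ]; exact Fin.cons_zero _ _
  have hzs : ∀ l : Fin k, Z l.succ = Y l := fun l => by
    rw [hZ]; exact Fin.cons_succ _ _ _
  have hZm : ∀ i, Measurable (Z i) := by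
    intro i
    refine Fin.cases ?_ (fun l => ?_) i
    · rw [hz0]
      exact hζm
    · rw [hzs l]
      exact (hXm l).sub_const (m l)
  have hZb : ∀ i, ∃ M, ∀ ω, ‖Z i ω‖ ≤ M := by
    intro i
    refine Fin.cases ?_ (fun l => ?_) i
    · refine ⟨Mζ, fun ω => ?_⟩
      rw [hz0]
      exact hMζ ω
    · refine ⟨MX + ‖m l‖, fun ω => ?_⟩
      rw [hzs l]
      show ‖X l ω - m l‖ ≤ MX + ‖m l‖
      calc ‖X l ω - m l‖
          ≤ ‖X l ω‖ + ‖m l‖ := by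
            exact norm_sub_le (X l ω) (m l)
        _ ≤ MX + ‖m l‖ := by gcongr; exact hMX l ω
  -- centering
  have hc : jointCumulant μ (k+1) (Fin.cons ζ X) = jointCumulant μ (k+1) Z := by
    have hfun : (fun i ω => Z i ω + (Fin.cons (0:ℂ) m : Fin (k+1) → ℂ) i) = Fin.cons ζ X := by
      funext i
      refine Fin.cases ?_ (fun l => ?_) i
      · funext ω
        simp only [hz0, Fin.cons_zero, add_zero]
      · funext ω
        simp only [hzs l, Fin.cons_succ, hY]
        simp
    have h := jointCumulant_add_consts (μ := μ) (n := k+1) (by omega) Z hZm hZb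
      (Fin.cons (0:ℂ) m)
    rw [hfun] at h
    exact h
  rw [hc, jointCumulant_eq]
  -- exponents
  set p : Fin (k+1) → ℝ := fun i => if i = 0 then 2 else (2*k : ℝ) with hp
  set N : Fin (k+1) → ℝ :=
    fun i => (∫ ω, ‖Z i ω‖ ^ (p i) ∂μ) ^ (p i)⁻¹ with hN
  have hp0 : p 0 = 2 := by simp [hp]
  have hpsucc : ∀ l : Fin k, p l.succ = (2*k : ℝ) := fun l => by
    simp [hp, Fin.succ_ne_zero]
  have hp1 : ∀ i, 1 ≤ p i := by
    intro i
    by_cases hi : i = 0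
    · norm_num [hp, hi]
    · have h1 : (1:ℝ) ≤ (k:ℝ) := by exact_mod_cast hk
      simp only [hp, if_neg hi]
      linarith
  have hNnn : ∀ i, 0 ≤ N i := fun i => Real.rpow_nonneg
    (integral_nonneg fun ω => Real.rpow_nonneg (norm_nonneg _) _) _
  -- per-block Hölder bound
  have hblock : ∀ B : Finset (Fin (k+1)),
      ‖∫ ω, ∏ i ∈ B, Z i ω ∂μ‖ ≤ ∏ i ∈ B, N i := by
    intro B
    refine abs_integral_prod_le B Z hZm hZb p hp1 ?_
    have hkinv : (k:ℝ) * (2*(k:ℝ))⁻¹ = 2⁻¹ := by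
      have hk0 : (k:ℝ) ≠ 0 := by exact_mod_cast hk.ne'
      field_simp
    have herase : ∀ (B' : Finset (Fin (k+1))), (0 : Fin (k+1)) ∉ B' →
        ∑ i ∈ B', (p i)⁻¹ = B'.card * (2*(k:ℝ))⁻¹ := by
      intro B' h0
      have hcongr : ∀ i ∈ B', (p i)⁻¹ = (2*(k:ℝ))⁻¹ := by
        intro i hi
        have hi0 : i ≠ 0 := fun e => h0 (e ▸ hi)
        simp [hp, hi0]
      rw [Finset.sum_congr rfl hcongr, Finset.sum_const, nsmul_eq_mul]
    by_cases h0 : (0 : Fin (k+1)) ∈ B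
    · rw [← Finset.add_sum_erase B _ h0, herase _ (Finset.notMem_erase _ _), hp0]
      have hcard : ((B.erase 0).card : ℝ) ≤ (k:ℝ) := by
        have hsub : B.erase 0 ⊆ Finset.univ.erase 0 :=
          Finset.erase_subset_erase _ (Finset.subset_univ B)
        have hle := Finset.card_le_card hsub
        rw [Finset.card_erase_of_mem (Finset.mem_univ _), Finset.card_univ,
          Fintype.card_fin] at hle
        exact_mod_cast le_trans hle (by omega)
      have hpos : (0:ℝ) ≤ (2*(k:ℝ))⁻¹ := by positivity
      have h1 : ((B.erase 0).card : ℝ) * (2*(k:ℝ))⁻¹ ≤ (k:ℝ) * (2*(k:ℝ))⁻¹ :=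
        mul_le_mul_of_nonneg_right hcard hpos
      rw [hkinv] at h1
      linarith
    · rw [herase B h0]
      have hcard : (B.card : ℝ) ≤ (k:ℝ) := by
        have hsub : B ⊆ Finset.univ.erase 0 := fun i hi =>
          Finset.mem_erase.2 ⟨fun e => h0 (e ▸ hi), Finset.mem_univ _⟩
        have hle := Finset.card_le_card hsub
        rw [Finset.card_erase_of_mem (Finset.mem_univ _), Finset.card_univ,
          Fintype.card_fin] at hle
        exact_mod_cast le_trans hle (by omega)
      have hpos : (0:ℝ) ≤ (2*(k:ℝ))⁻¹ := by positivity
      have h1 : (B.card : ℝ) * (2*(k:ℝ))⁻¹ ≤ (k:ℝ) * (2*(k:ℝ))⁻¹ :=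
        mul_le_mul_of_nonneg_right hcard hpos
      rw [hkinv] at h1
      linarith
  -- sum bound
  have hsum : ‖∑ P ∈ parts (k+1),
      (-1 : ℂ) ^ (P.card - 1) * (Nat.factorial (P.card - 1) : ℂ) *
        ∏ B ∈ P, ∫ ω, ∏ i ∈ B, Z i ω ∂μ‖
      ≤ ((parts (k+1)).card * (k.factorial) : ℝ) * ∏ i, N i := by
    have htri : ‖∑ P ∈ parts (k+1),
        (-1 : ℂ) ^ (P.card - 1) * (Nat.factorial (P.card - 1) : ℂ) *
          ∏ B ∈ P, ∫ ω, ∏ i ∈ B, Z i ω ∂μ‖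
        ≤ ∑ P ∈ parts (k+1), ‖
          (-1 : ℂ) ^ (P.card - 1) * (Nat.factorial (P.card - 1) : ℂ) *
            ∏ B ∈ P, ∫ ω, ∏ i ∈ B, Z i ω ∂μ‖ := by
      exact norm_sum_le _ _
    refine le_trans htri ?_
    have hterm : ∀ P ∈ parts (k+1), ‖
        (-1 : ℂ) ^ (P.card - 1) * (Nat.factorial (P.card - 1) : ℂ) *
          ∏ B ∈ P, ∫ ω, ∏ i ∈ B, Z i ω ∂μ‖
        ≤ (k.factorial : ℝ) * ∏ i, N i := by
      intro P hP
      obtain ⟨hPe, hPc, hPd⟩ := mem_parts.1 hP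
      have hdisj : ∀ A ∈ P, ∀ B ∈ P, A ≠ B → Disjoint (id A) (id B) := hPd
      have hbiU : P.biUnion id = Finset.univ := by
        ext i
        simp only [Finset.mem_biUnion, id]
        exact ⟨fun _ => Finset.mem_univ i, fun _ => hPc i⟩
      have hcardP : P.card ≤ k + 1 := by
        have h1 : P.card ≤ ∑ B ∈ P, B.card := by
          rw [Finset.card_eq_sum_ones]
          refine Finset.sum_le_sum fun B hB => ?_
          exact Nat.one_le_iff_ne_zero.2
            (fun e => hPe (by rwa [Finset.card_eq_zero.1 e] at hB))
        have h2 : ∑ B ∈ P, B.card = k + 1 := by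
          have h3 := Finset.card_biUnion hdisj
          rw [hbiU, Finset.card_univ, Fintype.card_fin] at h3
          simpa [id] using h3.symm
        rw [h2] at h1
        exact h1
      have hfact : ((P.card - 1).factorial : ℝ) ≤ (k.factorial : ℝ) := by
        exact_mod_cast Nat.factorial_le (by omega)
      have habsw : ‖(-1 : ℂ) ^ (P.card - 1)
          * ((P.card - 1).factorial : ℂ)‖ = ((P.card - 1).factorial : ℝ) := by
        rw [norm_mul, norm_pow]
        simp
      rw [norm_mul, habsw]
      have hprodle : ‖∏ B ∈ P, ∫ ω, ∏ i ∈ B, Z i ω ∂μ‖ ≤ ∏ i, N i := by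
        rw [norm_prod]
        calc ∏ B ∈ P, ‖∫ ω, ∏ i ∈ B, Z i ω ∂μ‖
            ≤ ∏ B ∈ P, ∏ i ∈ B, N i :=
              Finset.prod_le_prod (fun B _ => norm_nonneg _)
                (fun B _ => hblock B)
          _ = ∏ i ∈ P.biUnion id, N i := (Finset.prod_biUnion hdisj).symm
          _ = ∏ i, N i := by rw [hbiU]
      exact mul_le_mul hfact hprodle (norm_nonneg _) (by positivity)
    refine le_trans (Finset.sum_le_sum hterm) (le_of_eq ?_)
    rw [Finset.sum_const, nsmul_eq_mul]
    ring
  refine le_trans hsum ?_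
  -- identify the norms
  have hN0 : N 0 = Real.sqrt (∫ ω, ‖ζ ω‖ ^ 2 ∂μ) := by
    simp only [hN, hp0]
    rw [Real.sqrt_eq_rpow, one_div]
    congr 1
    refine integral_congr_ae (Filter.Eventually.of_forall fun ω => ?_)
    show ‖Z 0 ω‖ ^ (2:ℝ) = ‖ζ ω‖ ^ (2:ℕ)
    rw [hz0, show (2:ℝ) = ((2:ℕ):ℝ) by norm_num, Real.rpow_natCast]
  have hNs : ∀ i : Fin k, N i.succ
      = (∫ ω, ‖X i ω - ∫ ω', X i ω' ∂μ‖ ^ (2 * k) ∂μ)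
        ^ ((2 * k : ℝ))⁻¹ := by
    intro i
    simp only [hN, hpsucc i]
    congr 1
    refine integral_congr_ae (Filter.Eventually.of_forall fun ω => ?_)
    have hzv : Z i.succ ω = X i ω - ∫ ω', X i ω' ∂μ := by
      simp only [hzs i, hY, hm]
    show ‖Z i.succ ω‖ ^ (2*(k:ℝ))
        = ‖X i ω - ∫ ω', X i ω' ∂μ‖ ^ (2*k)
    rw [hzv, show (2*(k:ℝ)) = ((2*k:ℕ):ℝ) by push_cast; ring, Real.rpow_natCast]
  have hprodN : ∏ i, N i = Real.sqrt (∫ ω, ‖ζ ω‖ ^ 2 ∂μ) *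
      ∏ i : Fin k, (∫ ω, ‖X i ω - ∫ ω', X i ω' ∂μ‖ ^ (2 * k) ∂μ) ^
        ((2 * k : ℝ))⁻¹ := by
    rw [Fin.prod_univ_succ, hN0]
    congr 1
    exact Finset.prod_congr rfl fun i _ => hNs i
  rw [hprodN]
  have hrest : (0:ℝ) ≤ Real.sqrt (∫ ω, ‖ζ ω‖ ^ 2 ∂μ) *
      ∏ i : Fin k, (∫ ω, ‖X i ω - ∫ ω', X i ω' ∂μ‖ ^ (2 * k) ∂μ) ^
        ((2 * k : ℝ))⁻¹ :=
    mul_nonneg (Real.sqrt_nonneg _) (Finset.prod_nonneg fun i _ =>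
      Real.rpow_nonneg (integral_nonneg fun ω => by positivity) _)
  have hC : ((parts (k+1)).card * (k.factorial) : ℝ)
      ≤ ((parts (k+1)).card * (k.factorial) : ℝ) + 1 := by linarith
  refine le_trans (mul_le_mul_of_nonneg_right hC hrest) (le_of_eq (by ring))
end

section
/- For the single-interval discrete log-gas with weight w(x;N), suppose w(x)/w(x-1) = \phi^+(x)/\phi^-(x) with \phi^+(M+1) = \phi^-(0) = 0 and \phi^\pm analytic in a neighborhood of [-1, M+1]. Then the function R_N(\xi) = \phi^-(\xi) E[\prod_{i=1}^N (1 - 1/(\xi - \ell_i))] + \phi^+(\xi) E[\prod_{i=1}^N (1 + 1/(\xi - \ell_i - 1))] extends to a holomorphic function on the same neighborhood; i.e., all residues of R_N at integer points m \in \{0, 1, ..., M\} vanish. -/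
open scoped BigOperators

/-- Configurations of `N` particles on `{0, 1, …, M}` (as functions; the ordering is
enforced by an indicator inside the weight). -/
def Config (N M : ℕ) := Fin N → (Finset.Icc (0 : ℤ) (M : ℤ))

noncomputable instance (N M : ℕ) : Fintype (Config N M) := by
  unfold Config; infer_instance

/-- The (unnormalized) weight of a configuration:
`1_{ℓ₁ < … < ℓ_N} ∏_{i<j} (ℓᵢ - ℓⱼ)² ∏ᵢ w(ℓᵢ)`. -/
noncomputable def configWeight (N M : ℕ) (w : ℤ → ℝ) (ℓ : Config N M) : ℝ :=
  (if StrictMono (fun i => (ℓ i : ℤ)) then (1 : ℝ) else 0) *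
    (∏ i : Fin N, ∏ j ∈ Finset.univ.filter (fun j : Fin N => i < j),
      (((ℓ i : ℤ) : ℝ) - ((ℓ j : ℤ) : ℝ)) ^ 2) *
    ∏ i : Fin N, w (ℓ i)

/-- The partition function `Z`. -/
noncomputable def partitionZ (N M : ℕ) (w : ℤ → ℝ) : ℝ :=
  ∑ ℓ : Config N M, configWeight N M w ℓ

/-- The Nekrasov observable
`R_N(ξ) = φ⁻(ξ) E[∏ᵢ(1 - 1/(ξ-ℓᵢ))] + φ⁺(ξ) E[∏ᵢ(1 + 1/(ξ-ℓᵢ-1))]`. -/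
noncomputable def nekrasovR (N M : ℕ) (w : ℤ → ℝ) (φp φm : ℂ → ℂ) (ξ : ℂ) : ℂ :=
  φm ξ * (((partitionZ N M w : ℝ) : ℂ)⁻¹ *
      ∑ ℓ : Config N M, ((configWeight N M w ℓ : ℝ) : ℂ) *
        ∏ i : Fin N, (1 - (ξ - ((ℓ i : ℤ) : ℂ))⁻¹)) +
  φp ξ * (((partitionZ N M w : ℝ) : ℂ)⁻¹ *
      ∑ ℓ : Config N M, ((configWeight N M w ℓ : ℝ) : ℂ) *
        ∏ i : Fin N, (1 + (ξ - ((ℓ i : ℤ) : ℂ) - 1)⁻¹))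

namespace Nek

open Finset

variable {N M : ℕ}

/-- The integer points `{0, 1, …, M+1}` where poles may occur. -/
noncomputable def IccM (M : ℕ) : Finset ℤ := Finset.Icc (0:ℤ) ((M:ℤ)+1)

/-- `Q(ξ) = ∏_{k=0}^{M+1} (ξ - k)`. -/
noncomputable def Qc (M : ℕ) (ξ : ℂ) : ℂ := ∏ k ∈ IccM M, (ξ - (k:ℂ))

noncomputable def DmS (M : ℕ) (ℓ : Config N M) : Finset ℤ :=
  (IccM M).filter (fun k => ∀ i, (ℓ i : ℤ) ≠ k)

noncomputable def DpS (M : ℕ) (ℓ : Config N M) : Finset ℤ :=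
  (IccM M).filter (fun k => ∀ i, (ℓ i : ℤ) + 1 ≠ k)

/-- `Q(ξ) ∏ᵢ (1 - 1/(ξ-ℓᵢ))`, written as a polynomial in `ξ`. -/
noncomputable def Amf (M : ℕ) (ℓ : Config N M) (ξ : ℂ) : ℂ :=
  (∏ i, (ξ - ((ℓ i : ℤ) : ℂ) - 1)) * ∏ k ∈ DmS M ℓ, (ξ - (k:ℂ))

/-- `Q(ξ) ∏ᵢ (1 + 1/(ξ-ℓᵢ-1))`, written as a polynomial in `ξ`. -/
noncomputable def Apf (M : ℕ) (ℓ : Config N M) (ξ : ℂ) : ℂ :=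
  (∏ i, (ξ - ((ℓ i : ℤ) : ℂ))) * ∏ k ∈ DpS M ℓ, (ξ - (k:ℂ))

/-- `G = Q · R_N`, with poles cleared. -/
noncomputable def Gf (N M : ℕ) (w : ℤ → ℝ) (φp φm : ℂ → ℂ) (ξ : ℂ) : ℂ :=
  φm ξ * (((partitionZ N M w : ℝ) : ℂ)⁻¹ *
      ∑ ℓ : Config N M, ((configWeight N M w ℓ : ℝ) : ℂ) * Amf M ℓ ξ) +
  φp ξ * (((partitionZ N M w : ℝ) : ℂ)⁻¹ *
      ∑ ℓ : Config N M, ((configWeight N M w ℓ : ℝ) : ℂ) * Apf M ℓ ξ)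

noncomputable def iterD : List ℂ → (ℂ → ℂ) → (ℂ → ℂ)
  | [], f => f
  | a :: t, f => iterD t (dslope f a)

lemma iterD_diff {𝒩 : Set ℂ} (h𝒩 : IsOpen 𝒩) :
    ∀ (l : List ℂ) (f : ℂ → ℂ), (∀ a ∈ l, a ∈ 𝒩) → DifferentiableOn ℂ f 𝒩 →
      DifferentiableOn ℂ (iterD l f) 𝒩
  | [], _, _, hf => hf
  | a :: t, _, hl, hf =>
    iterD_diff h𝒩 t _ (fun b hb => hl b (List.mem_cons_of_mem _ hb))
      ((Complex.differentiableOn_dslope (h𝒩.mem_nhds (hl a (List.mem_cons_self)))).mpr hf)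

lemma iterD_eval :
    ∀ (l : List ℂ) (f : ℂ → ℂ), l.Nodup → (∀ a ∈ l, f a = 0) → ∀ x, x ∉ l →
      iterD l f x = f x / (l.map (fun a => x - a)).prod
  | [], f, _, _, x, _ => by simp [iterD]
  | a :: t, f, hnd, hv, x, hx => by
    have hxa : x ≠ a := fun h => hx (h ▸ List.mem_cons_self)
    have hxt : x ∉ t := fun h => hx (List.mem_cons_of_mem _ h)
    have hfa : f a = 0 := hv a (List.mem_cons_self)
    have hv' : ∀ b ∈ t, dslope f a b = 0 := by
      intro b hb
      have hba : b ≠ a := fun h => (List.nodup_cons.1 hnd).1 (h ▸ hb)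
      rw [dslope_of_ne _ hba, slope_def_field, hfa, hv b (List.mem_cons_of_mem _ hb)]
      simp
    have := iterD_eval t (dslope f a) (List.nodup_cons.1 hnd).2 hv' x hxt
    rw [iterD, this, dslope_of_ne _ hxa, slope_def_field, hfa, sub_zero]
    rw [List.map_cons, List.prod_cons, div_div]

lemma prod_split {ι : Type*} [DecidableEq ι] (s : Finset ℤ) (t : Finset ι) (g : ι → ℤ)
    (hg : ∀ i ∈ t, ∀ j ∈ t, g i = g j → i = j) (hsub : ∀ i ∈ t, g i ∈ s) (f : ℤ → ℂ) :
    ∏ k ∈ s, f k = (∏ i ∈ t, f (g i)) * ∏ k ∈ s.filter (fun k => ∀ i ∈ t, g i ≠ k), f k := by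
  classical
  rw [← Finset.prod_filter_mul_prod_filter_not s (fun k => ∃ i ∈ t, g i = k)]
  congr 1
  · rw [show s.filter (fun k => ∃ i ∈ t, g i = k) = t.image g from ?_, Finset.prod_image hg]
    ext k
    simp only [mem_filter, mem_image]
    constructor
    · rintro ⟨-, i, hi, rfl⟩; exact ⟨i, hi, rfl⟩
    · rintro ⟨i, hi, rfl⟩; exact ⟨hsub i hi, i, hi, rfl⟩
  · apply Finset.prod_congr _ (fun _ _ => rfl)
    ext k
    simp only [mem_filter]
    constructor
    · rintro ⟨hk, h⟩; exact ⟨hk, fun i hi he => h ⟨i, hi, he⟩⟩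
    · rintro ⟨hk, h⟩; exact ⟨hk, fun ⟨i, hi, he⟩ => h i hi he⟩

lemma vand_split (a : Fin N → ℂ) (i0 : Fin N) :
    (∏ i, ∏ j ∈ Finset.univ.filter (fun j => i < j), (a i - a j)^2)
      = (∏ j ∈ Finset.univ.erase i0, (a i0 - a j)^2) *
        ∏ i ∈ Finset.univ.erase i0,
          ∏ j ∈ (Finset.univ.filter (fun j => i < j)).erase i0, (a i - a j)^2 := by
  classical
  rw [← Finset.mul_prod_erase Finset.univ _ (Finset.mem_univ i0)]
  have hinner : ∀ i ∈ Finset.univ.erase i0,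
      (∏ j ∈ Finset.univ.filter (fun j => i < j), (a i - a j)^2)
        = (if i < i0 then (a i - a i0)^2 else 1) *
          ∏ j ∈ (Finset.univ.filter (fun j => i < j)).erase i0, (a i - a j)^2 := by
    intro i hi
    by_cases h : i < i0
    · rw [if_pos h, ← Finset.mul_prod_erase _ _ (Finset.mem_filter.mpr ⟨Finset.mem_univ _, h⟩)]
    · rw [if_neg h, one_mul, Finset.erase_eq_of_notMem (fun hc => h (Finset.mem_filter.mp hc).2)]
  rw [Finset.prod_congr rfl hinner, Finset.prod_mul_distrib]
  have h1 : (∏ i ∈ Finset.univ.erase i0, (if i < i0 then (a i - a i0)^2 else 1))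
      = ∏ i ∈ Finset.univ.filter (fun i => i < i0), (a i0 - a i)^2 := by
    rw [← Finset.prod_filter]
    have hs : (Finset.univ.erase i0).filter (fun i => i < i0)
        = Finset.univ.filter (fun i => i < i0) := by
      ext i; simp only [Finset.mem_filter, Finset.mem_erase, Finset.mem_univ, true_and,
        and_true]
      exact ⟨fun h => h.2, fun h => ⟨ne_of_lt h, h⟩⟩
    rw [hs]
    exact Finset.prod_congr rfl (fun i _ => by ring)
  have h2 : (∏ j ∈ Finset.univ.filter (fun j => i0 < j), (a i0 - a j)^2) *
      ∏ i ∈ Finset.univ.filter (fun i => i < i0), (a i0 - a i)^2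
        = ∏ j ∈ Finset.univ.erase i0, (a i0 - a j)^2 := by
    rw [← Finset.prod_union (by
      simp only [Finset.disjoint_filter]
      intro x _ hx hx'
      exact absurd hx' (not_lt_of_gt hx))]
    apply Finset.prod_congr _ (fun _ _ => rfl)
    ext j
    simp only [Finset.mem_union, Finset.mem_filter, Finset.mem_erase, Finset.mem_univ,
      true_and, and_true]
    constructor
    · rintro (h | h); exacts [ne_of_gt h, ne_of_lt h]
    · intro h; exact (lt_or_gt_of_ne h.symm).symm.imp id id |>.symm.imp id id
  rw [h1, ← mul_assoc, h2]

lemma configWeight_cast (w : ℤ → ℝ) (ℓ : Config N M) :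
    ((configWeight N M w ℓ : ℝ) : ℂ) =
      (if StrictMono (fun i => (ℓ i : ℤ)) then (1:ℂ) else 0) *
        (∏ i, ∏ j ∈ Finset.univ.filter (fun j => i < j),
          (((ℓ i : ℤ) : ℂ) - ((ℓ j : ℤ) : ℂ))^2) *
        ∏ i, ((w (ℓ i) : ℝ) : ℂ) := by
  unfold configWeight
  push_cast [apply_ite (fun x : ℝ => (x : ℂ))]
  ring

lemma mem_IccM_of_val {M : ℕ} (x : (Finset.Icc (0:ℤ) (M:ℤ))) : (x : ℤ) ∈ IccM M := by
  have := x.2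
  simp only [Finset.mem_Icc] at this ⊢
  unfold IccM
  simp only [Finset.mem_Icc]
  omega

lemma val_bounds {M : ℕ} (x : (Finset.Icc (0:ℤ) (M:ℤ))) : 0 ≤ (x:ℤ) ∧ (x:ℤ) ≤ (M:ℤ) := by
  have h := x.2
  rw [Finset.mem_Icc] at h
  exact h

lemma Amf_zero_of_not_mem (ℓ : Config N M) {m : ℤ} (hm : m ∈ IccM M)
    (h : ∀ i, (ℓ i : ℤ) ≠ m) : Amf M ℓ ((m:ℤ):ℂ) = 0 := by
  unfold Amf
  apply mul_eq_zero_of_right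
  exact Finset.prod_eq_zero (show m ∈ DmS M ℓ from Finset.mem_filter.mpr ⟨hm, h⟩) (sub_self _)

lemma Amf_zero_of_pred_mem (ℓ : Config N M) {m : ℤ} (j : Fin N)
    (hj : (ℓ j : ℤ) = m - 1) : Amf M ℓ ((m:ℤ):ℂ) = 0 := by
  unfold Amf
  rw [Finset.prod_eq_zero (Finset.mem_univ j) (by rw [hj]; push_cast; ring), zero_mul]

lemma Apf_zero_of_mem (ℓ : Config N M) {m : ℤ} (j : Fin N)
    (hj : (ℓ j : ℤ) = m) : Apf M ℓ ((m:ℤ):ℂ) = 0 := by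
  unfold Apf
  rw [Finset.prod_eq_zero (Finset.mem_univ j) (by rw [hj]; ring), zero_mul]

lemma Apf_zero_of_pred_not_mem (ℓ : Config N M) {m : ℤ} (hm : m ∈ IccM M)
    (h : ∀ i, (ℓ i : ℤ) ≠ m - 1) : Apf M ℓ ((m:ℤ):ℂ) = 0 := by
  unfold Apf
  apply mul_eq_zero_of_right
  exact Finset.prod_eq_zero
    (show m ∈ DpS M ℓ from Finset.mem_filter.mpr ⟨hm, fun i hi => h i (by omega)⟩) (sub_self _)

/-- Swapping the values `m` and `m-1` in a configuration. -/
def swapC (m : ℤ) (h1 : m ∈ Finset.Icc (0:ℤ) (M:ℤ)) (h2 : m - 1 ∈ Finset.Icc (0:ℤ) (M:ℤ))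
    (ℓ : Config N M) : Config N M :=
  fun i => if (ℓ i : ℤ) = m then ⟨m - 1, h2⟩ else if (ℓ i : ℤ) = m - 1 then ⟨m, h1⟩ else ℓ i

lemma swapC_coe (m : ℤ) (h1 : m ∈ Finset.Icc (0:ℤ) (M:ℤ)) (h2 : m - 1 ∈ Finset.Icc (0:ℤ) (M:ℤ))
    (ℓ : Config N M) (i : Fin N) :
    ((swapC m h1 h2 ℓ i : ℤ)) =
      if (ℓ i : ℤ) = m then m - 1 else if (ℓ i : ℤ) = m - 1 then m else (ℓ i : ℤ) := by
  unfold swapC; split_ifs <;> rfl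

lemma swapC_invol (m : ℤ) (h1 : m ∈ Finset.Icc (0:ℤ) (M:ℤ))
    (h2 : m - 1 ∈ Finset.Icc (0:ℤ) (M:ℤ)) :
    Function.Involutive (swapC (N := N) m h1 h2) := by
  intro ℓ
  funext i
  apply Subtype.ext
  show ((swapC m h1 h2 (swapC m h1 h2 ℓ) i : ℤ)) = (ℓ i : ℤ)
  rw [swapC_coe, swapC_coe]
  split_ifs <;> omega

lemma swap_strictMono_iff (m : ℤ) (h1 : m ∈ Finset.Icc (0:ℤ) (M:ℤ))
    (h2 : m - 1 ∈ Finset.Icc (0:ℤ) (M:ℤ)) (ℓ : Config N M)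
    (hno : ∀ i, (ℓ i : ℤ) ≠ m - 1) :
    StrictMono (fun i => (swapC m h1 h2 ℓ i : ℤ)) ↔ StrictMono (fun i => (ℓ i : ℤ)) := by
  have key : ∀ i j : Fin N,
      ((swapC m h1 h2 ℓ i : ℤ) < (swapC m h1 h2 ℓ j : ℤ)) ↔ ((ℓ i : ℤ) < (ℓ j : ℤ)) := by
    intro i j
    rw [swapC_coe, swapC_coe]
    have := hno i
    have := hno j
    split_ifs <;> omega
  constructor
  · intro h i j hij; exact (key i j).mp (h hij)
  · intro h i j hij; exact (key i j).mpr (h hij)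

lemma pair_cancel (w : ℤ → ℝ) (φp φm : ℂ → ℂ)
    (hratio : ∀ m : ℤ, 0 ≤ m → m ≤ (M : ℤ) + 1 →
      (w m : ℂ) * φm ((m : ℤ) : ℂ) = (w (m - 1) : ℂ) * φp ((m : ℤ) : ℂ))
    (m : ℤ) (hm1 : 1 ≤ m) (hm2 : m ≤ (M:ℤ))
    (h1 : m ∈ Finset.Icc (0:ℤ) (M:ℤ)) (h2 : m - 1 ∈ Finset.Icc (0:ℤ) (M:ℤ))
    (ℓ : Config N M) :
    φm ((m:ℤ):ℂ) * (((configWeight N M w ℓ : ℝ):ℂ) * Amf M ℓ ((m:ℤ):ℂ))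
      + φp ((m:ℤ):ℂ) * (((configWeight N M w (swapC m h1 h2 ℓ) : ℝ):ℂ) *
          Apf M (swapC m h1 h2 ℓ) ((m:ℤ):ℂ)) = 0 := by
  classical
  have hmI : m ∈ IccM M := by unfold IccM; simp only [Finset.mem_Icc]; omega
  by_cases hPm : ∃ i, (ℓ i : ℤ) = m
  · by_cases hPm1 : ∃ j, (ℓ j : ℤ) = m - 1
    · obtain ⟨j, hj⟩ := hPm1
      have e1 : Amf M ℓ ((m:ℤ):ℂ) = 0 := Amf_zero_of_pred_mem ℓ j hj
      have e2 : Apf M (swapC m h1 h2 ℓ) ((m:ℤ):ℂ) = 0 := by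
        refine Apf_zero_of_mem _ j ?_
        rw [swapC_coe, if_neg (by omega : ¬ ((ℓ j : ℤ) = m)), if_pos hj]
      rw [e1, e2]; ring
    · -- the main pairing case
      have hno : ∀ i, (ℓ i : ℤ) ≠ m - 1 := fun i h => hPm1 ⟨i, h⟩
      obtain ⟨i0, hi0⟩ := hPm
      by_cases hsm : StrictMono (fun i => (ℓ i : ℤ))
      · have hinj : Function.Injective (fun i => (ℓ i : ℤ)) := hsm.injective
        have hEne : ∀ j ∈ Finset.univ.erase i0, (ℓ j : ℤ) ≠ m := by
          intro j hj heq
          exact (Finset.mem_erase.mp hj).1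
            (hinj (show (fun i => (ℓ i : ℤ)) j = (fun i => (ℓ i : ℤ)) i0 from
              heq.trans hi0.symm))
        have hL' : ∀ i, ((swapC m h1 h2 ℓ i : ℤ))
            = if i = i0 then m - 1 else (ℓ i : ℤ) := by
          intro i
          rw [swapC_coe]
          by_cases h : i = i0
          · subst h; rw [if_pos hi0, if_pos rfl]
          · rw [if_neg (hEne i (Finset.mem_erase.mpr ⟨h, Finset.mem_univ i⟩)),
              if_neg (hno i), if_neg h]
        have hsm' : StrictMono (fun i => (swapC m h1 h2 ℓ i : ℤ)) :=
          (swap_strictMono_iff m h1 h2 ℓ hno).mpr hsm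
        set u : ℂ := ∏ j ∈ Finset.univ.erase i0, (((m:ℤ):ℂ) - ((ℓ j : ℤ):ℂ)) with hu
        set v : ℂ := ∏ j ∈ Finset.univ.erase i0, (((m:ℤ):ℂ) - ((ℓ j : ℤ):ℂ) - 1) with hv
        set W0 : ℂ := ∏ j ∈ Finset.univ.erase i0, ((w (ℓ j) : ℝ):ℂ) with hW0
        set K : ℂ := ∏ i ∈ Finset.univ.erase i0,
          ∏ j ∈ (Finset.univ.filter (fun j => i < j)).erase i0,
            (((ℓ i : ℤ):ℂ) - ((ℓ j : ℤ):ℂ))^2 with hK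
        set D1 : ℂ := ∏ k ∈ DmS M ℓ, (((m:ℤ):ℂ) - (k:ℂ)) with hD1
        set D2 : ℂ := ∏ k ∈ DpS M (swapC m h1 h2 ℓ), (((m:ℤ):ℂ) - (k:ℂ)) with hD2
        set C : ℂ := ∏ k ∈ (IccM M).erase m, (((m:ℤ):ℂ) - (k:ℂ)) with hC
        have f1 : ((configWeight N M w ℓ : ℝ):ℂ) = u^2 * K * ((w m : ℂ) * W0) := by
          rw [configWeight_cast, if_pos hsm, one_mul,
            vand_split (fun i => ((ℓ i : ℤ):ℂ)) i0,
            ← Finset.mul_prod_erase Finset.univ (fun i => ((w (ℓ i) : ℝ):ℂ))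
              (Finset.mem_univ i0)]
          have e : ∀ j ∈ Finset.univ.erase i0,
              (((ℓ i0 : ℤ):ℂ) - ((ℓ j : ℤ):ℂ))^2 = (((m:ℤ):ℂ) - ((ℓ j : ℤ):ℂ))^2 := by
            intro j _; rw [hi0]
          rw [Finset.prod_congr rfl e, Finset.prod_pow, hi0]
          all_goals ring
        have f2 : Amf M ℓ ((m:ℤ):ℂ) = -1 * v * D1 := by
          unfold Amf
          rw [← Finset.mul_prod_erase Finset.univ _ (Finset.mem_univ i0), hi0]
          all_goals ring
        have f3 : u * D1 = C := by
          have hsub : ∀ j ∈ Finset.univ.erase i0, (ℓ j : ℤ) ∈ (IccM M).erase m :=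
            fun j hj => Finset.mem_erase.mpr ⟨hEne j hj, mem_IccM_of_val (ℓ j)⟩
          have hgI : ∀ i ∈ Finset.univ.erase i0, ∀ j ∈ Finset.univ.erase i0,
              (ℓ i : ℤ) = (ℓ j : ℤ) → i = j := fun i _ j _ h => hinj h
          have hsplit := prod_split ((IccM M).erase m) (Finset.univ.erase i0)
            (fun j => (ℓ j : ℤ)) hgI hsub (fun k => ((m:ℤ):ℂ) - (k:ℂ))
          have hset : DmS M ℓ = ((IccM M).erase m).filter
              (fun k => ∀ j ∈ Finset.univ.erase i0, (ℓ j : ℤ) ≠ k) := by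
            ext k
            simp only [Finset.mem_filter, Finset.mem_erase, DmS]
            constructor
            · rintro ⟨hkI, hall⟩
              exact ⟨⟨fun h => hall i0 (by rw [hi0, h]), hkI⟩, fun j _ => hall j⟩
            · rintro ⟨⟨hkm, hkI⟩, hall⟩
              refine ⟨hkI, fun i => ?_⟩
              by_cases h : i = i0
              · subst h; rw [hi0]; exact fun h' => hkm h'.symm
              · exact hall i ⟨h, Finset.mem_univ i⟩
          rw [hu, hD1, hC, hsplit]
          congr 1
          apply Finset.prod_congr _ (fun _ _ => rfl)
          rw [hset]
          congr
        have f4 : ((configWeight N M w (swapC m h1 h2 ℓ) : ℝ):ℂ)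
            = v^2 * K * ((w (m-1) : ℂ) * W0) := by
          rw [configWeight_cast, if_pos hsm', one_mul,
            vand_split (fun i => ((swapC m h1 h2 ℓ i : ℤ):ℂ)) i0,
            ← Finset.mul_prod_erase Finset.univ
              (fun i => ((w (swapC m h1 h2 ℓ i) : ℝ):ℂ)) (Finset.mem_univ i0)]
          have e1 : ∀ j ∈ Finset.univ.erase i0,
              (((swapC m h1 h2 ℓ i0 : ℤ):ℂ) - ((swapC m h1 h2 ℓ j : ℤ):ℂ))^2
                = (((m:ℤ):ℂ) - ((ℓ j : ℤ):ℂ) - 1)^2 := by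
            intro j hj
            rw [hL' i0, if_pos rfl, hL' j, if_neg (Finset.mem_erase.mp hj).1]
            push_cast
            ring
          have e2 : ∀ i ∈ Finset.univ.erase i0,
              (∏ j ∈ (Finset.univ.filter (fun j => i < j)).erase i0,
                (((swapC m h1 h2 ℓ i : ℤ):ℂ) - ((swapC m h1 h2 ℓ j : ℤ):ℂ))^2)
              = ∏ j ∈ (Finset.univ.filter (fun j => i < j)).erase i0,
                (((ℓ i : ℤ):ℂ) - ((ℓ j : ℤ):ℂ))^2 := by
            intro i hi
            refine Finset.prod_congr rfl (fun j hj => ?_)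
            rw [hL' i, if_neg (Finset.mem_erase.mp hi).1,
              hL' j, if_neg (Finset.mem_erase.mp hj).1]
          have e3 : ∀ j ∈ Finset.univ.erase i0,
              ((w (swapC m h1 h2 ℓ j) : ℝ):ℂ) = ((w (ℓ j) : ℝ):ℂ) := by
            intro j hj
            rw [show ((swapC m h1 h2 ℓ j : ℤ)) = ((ℓ j : ℤ)) from
              (hL' j).trans (if_neg (Finset.mem_erase.mp hj).1)]
          have e4 : w ((swapC m h1 h2 ℓ i0 : ℤ)) = w (m - 1) := by
            rw [(hL' i0).trans (if_pos rfl)]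
          rw [Finset.prod_congr rfl e1, Finset.prod_congr rfl e2,
            Finset.prod_congr rfl e3, Finset.prod_pow, e4]
          all_goals ring
        have f5 : Apf M (swapC m h1 h2 ℓ) ((m:ℤ):ℂ) = u * D2 := by
          unfold Apf
          rw [← Finset.mul_prod_erase Finset.univ _ (Finset.mem_univ i0)]
          have e0 : ((m:ℤ):ℂ) - ((swapC m h1 h2 ℓ i0 : ℤ):ℂ) = 1 := by
            rw [(hL' i0).trans (if_pos rfl)]
            push_cast
            ring
          have e1 : ∀ j ∈ Finset.univ.erase i0,
              ((m:ℤ):ℂ) - ((swapC m h1 h2 ℓ j : ℤ):ℂ) = ((m:ℤ):ℂ) - ((ℓ j : ℤ):ℂ) := by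
            intro j hj
            rw [(hL' j).trans (if_neg (Finset.mem_erase.mp hj).1)]
          rw [e0, Finset.prod_congr rfl e1]
          all_goals ring
        have f6 : v * D2 = C := by
          have hsub : ∀ j ∈ Finset.univ.erase i0, (ℓ j : ℤ) + 1 ∈ (IccM M).erase m := by
            intro j hj
            refine Finset.mem_erase.mpr ⟨fun h => hno j (by omega), ?_⟩
            have := val_bounds (ℓ j)
            unfold IccM
            simp only [Finset.mem_Icc]
            omega
          have hgI : ∀ i ∈ Finset.univ.erase i0, ∀ j ∈ Finset.univ.erase i0,
              (ℓ i : ℤ) + 1 = (ℓ j : ℤ) + 1 → i = j :=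
            fun i _ j _ h => hinj (show ((ℓ i : ℤ)) = ((ℓ j : ℤ)) by omega)
          have hsplit := prod_split ((IccM M).erase m) (Finset.univ.erase i0)
            (fun j => (ℓ j : ℤ) + 1) hgI hsub (fun k => ((m:ℤ):ℂ) - (k:ℂ))
          have hset : DpS M (swapC m h1 h2 ℓ) = ((IccM M).erase m).filter
              (fun k => ∀ j ∈ Finset.univ.erase i0, (ℓ j : ℤ) + 1 ≠ k) := by
            ext k
            simp only [Finset.mem_filter, Finset.mem_erase, DpS]
            constructor
            · rintro ⟨hkI, hall⟩
              have hkm : k ≠ m := by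
                have := hall i0
                rw [(hL' i0).trans (if_pos rfl)] at this
                omega
              refine ⟨⟨hkm, hkI⟩, fun j hj => ?_⟩
              have := hall j
              rw [(hL' j).trans (if_neg hj.1)] at this
              exact this
            · rintro ⟨⟨hkm, hkI⟩, hall⟩
              refine ⟨hkI, fun i => ?_⟩
              by_cases h : i = i0
              · rw [h, (hL' i0).trans (if_pos rfl)]
                omega
              · rw [(hL' i).trans (if_neg h)]
                exact hall i ⟨h, Finset.mem_univ i⟩
          rw [hv, hD2, hC, hsplit]
          congr 1
          · refine Finset.prod_congr rfl (fun j _ => ?_)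
            push_cast
            ring
          · apply Finset.prod_congr _ (fun _ _ => rfl)
            rw [hset]
            congr
        have hr := hratio m (by omega) (by omega)
        rw [f1, f2, f4, f5]
        linear_combination (-(φm ((m:ℤ):ℂ) * (w m : ℂ) * K * W0 * u * v)) * f3
          + (φp ((m:ℤ):ℂ) * ((w (m-1) : ℝ):ℂ) * K * W0 * u * v) * f6
          + (-(K * W0 * u * v * C)) * hr
      · have z1 : configWeight N M w ℓ = 0 := by
          unfold configWeight; rw [if_neg hsm]; ring
        have hsm2 : ¬ StrictMono (fun i => (swapC m h1 h2 ℓ i : ℤ)) := by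
          intro h
          exact hsm ((swap_strictMono_iff m h1 h2 ℓ hno).mp h)
        have z2 : configWeight N M w (swapC m h1 h2 ℓ) = 0 := by
          unfold configWeight; rw [if_neg hsm2]; ring
        rw [z1, z2]
        push_cast
        ring
  · have hno : ∀ i, (ℓ i : ℤ) ≠ m := fun i h => hPm ⟨i, h⟩
    have e1 : Amf M ℓ ((m:ℤ):ℂ) = 0 := Amf_zero_of_not_mem ℓ hmI hno
    have e2 : Apf M (swapC m h1 h2 ℓ) ((m:ℤ):ℂ) = 0 := by
      by_cases hPm1 : ∃ j, (ℓ j : ℤ) = m - 1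
      · obtain ⟨j, hj⟩ := hPm1
        refine Apf_zero_of_mem _ j ?_
        rw [swapC_coe, if_neg (hno j), if_pos hj]
      · refine Apf_zero_of_pred_not_mem _ hmI (fun i => ?_)
        rw [swapC_coe, if_neg (hno i), if_neg (fun h => hPm1 ⟨i, h⟩)]
        exact fun h => hPm1 ⟨i, h⟩
    rw [e1, e2]
    ring

lemma G_vanish (w : ℤ → ℝ) (φp φm : ℂ → ℂ)
    (hφm0 : φm 0 = 0) (hφpM : φp ((M : ℂ) + 1) = 0)
    (hratio : ∀ m : ℤ, 0 ≤ m → m ≤ (M : ℤ) + 1 →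
      (w m : ℂ) * φm ((m : ℤ) : ℂ) = (w (m - 1) : ℂ) * φp ((m : ℤ) : ℂ))
    (m : ℤ) (hm : m ∈ IccM M) : Gf N M w φp φm ((m:ℤ):ℂ) = 0 := by
  classical
  have hmb : (0:ℤ) ≤ m ∧ m ≤ (M:ℤ) + 1 := by
    unfold IccM at hm
    rw [Finset.mem_Icc] at hm
    exact hm
  unfold Gf
  by_cases hm0 : m = 0
  · subst hm0
    have e1 : φm (((0:ℤ):ℤ):ℂ) = 0 := by
      rw [show ((((0:ℤ)):ℤ):ℂ) = (0:ℂ) by push_cast; ring]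
      exact hφm0
    have e2 : ∀ ℓ : Config N M, ((configWeight N M w ℓ : ℝ):ℂ) * Apf M ℓ (((0:ℤ)):ℂ) = 0 := by
      intro ℓ
      rw [Apf_zero_of_pred_not_mem ℓ hm (fun i => by have := val_bounds (ℓ i); omega), mul_zero]
    rw [e1, Finset.sum_eq_zero (fun ℓ _ => e2 ℓ)]
    ring
  · by_cases hmM : m = (M:ℤ) + 1
    · subst hmM
      have e1 : φp ((((M:ℤ)+1):ℤ):ℂ) = 0 := by
        rw [show (((((M:ℤ)+1)):ℤ):ℂ) = ((M:ℂ)+1) by push_cast; ring]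
        exact hφpM
      have e2 : ∀ ℓ : Config N M,
          ((configWeight N M w ℓ : ℝ):ℂ) * Amf M ℓ (((((M:ℤ)+1)) : ℤ):ℂ) = 0 := by
        intro ℓ
        rw [Amf_zero_of_not_mem ℓ hm (fun i => by have := val_bounds (ℓ i); omega), mul_zero]
      rw [e1, Finset.sum_eq_zero (fun ℓ _ => e2 ℓ)]
      ring
    · have h1 : m ∈ Finset.Icc (0:ℤ) (M:ℤ) := by rw [Finset.mem_Icc]; omega
      have h2 : m - 1 ∈ Finset.Icc (0:ℤ) (M:ℤ) := by rw [Finset.mem_Icc]; omega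
      have hre : (∑ ℓ : Config N M, ((configWeight N M w ℓ : ℝ):ℂ) * Apf M ℓ ((m:ℤ):ℂ))
          = ∑ ℓ : Config N M, ((configWeight N M w (swapC m h1 h2 ℓ) : ℝ):ℂ) *
              Apf M (swapC m h1 h2 ℓ) ((m:ℤ):ℂ) := by
        exact (Equiv.sum_comp (Function.Involutive.toPerm _ (swapC_invol m h1 h2))
          (fun ℓ => ((configWeight N M w ℓ : ℝ):ℂ) * Apf M ℓ ((m:ℤ):ℂ))).symm
      rw [hre]
      have key : (φm ((m:ℤ):ℂ) * (((partitionZ N M w : ℝ):ℂ)⁻¹ *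
            ∑ ℓ : Config N M, ((configWeight N M w ℓ : ℝ):ℂ) * Amf M ℓ ((m:ℤ):ℂ)) +
          φp ((m:ℤ):ℂ) * (((partitionZ N M w : ℝ):ℂ)⁻¹ *
            ∑ ℓ : Config N M, ((configWeight N M w (swapC m h1 h2 ℓ) : ℝ):ℂ) *
              Apf M (swapC m h1 h2 ℓ) ((m:ℤ):ℂ)))
          = ((partitionZ N M w : ℝ):ℂ)⁻¹ *
            ∑ ℓ : Config N M,
              (φm ((m:ℤ):ℂ) * (((configWeight N M w ℓ : ℝ):ℂ) * Amf M ℓ ((m:ℤ):ℂ))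
                + φp ((m:ℤ):ℂ) * (((configWeight N M w (swapC m h1 h2 ℓ) : ℝ):ℂ) *
                    Apf M (swapC m h1 h2 ℓ) ((m:ℤ):ℂ))) := by
        rw [Finset.sum_add_distrib, mul_add, ← Finset.mul_sum, ← Finset.mul_sum]
        ring
      rw [key, Finset.sum_eq_zero
        (fun ℓ _ => pair_cancel w φp φm hratio m (by omega) (by omega) h1 h2 ℓ), mul_zero]

lemma QR_eq_G (w : ℤ → ℝ) (φp φm : ℂ → ℂ) (ξ : ℂ) (hξ : ∀ k ∈ IccM M, ξ ≠ (k:ℂ)) :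
    Qc M ξ * nekrasovR N M w φp φm ξ = Gf N M w φp φm ξ := by
  classical
  have hterm1 : ∀ ℓ : Config N M, ((configWeight N M w ℓ : ℝ):ℂ) * Amf M ℓ ξ
      = Qc M ξ * (((configWeight N M w ℓ : ℝ):ℂ) *
          ∏ i, (1 - (ξ - ((ℓ i : ℤ):ℂ))⁻¹)) := by
    intro ℓ
    by_cases hW : configWeight N M w ℓ = 0
    · rw [hW]
      push_cast
      ring
    · have hsm : StrictMono (fun i => (ℓ i : ℤ)) := by
        by_contra hc
        exact hW (by unfold configWeight; rw [if_neg hc]; ring)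
      have hinj := hsm.injective
      have hne : ∀ i : Fin N, ξ - ((ℓ i : ℤ):ℂ) ≠ 0 :=
        fun i => sub_ne_zero.mpr (hξ _ (mem_IccM_of_val (ℓ i)))
      have hPm : (∏ i, (1 - (ξ - ((ℓ i : ℤ):ℂ))⁻¹))
          = (∏ i, (ξ - ((ℓ i : ℤ):ℂ) - 1)) * (∏ i, (ξ - ((ℓ i : ℤ):ℂ)))⁻¹ := by
        rw [← Finset.prod_inv_distrib, ← Finset.prod_mul_distrib]
        refine Finset.prod_congr rfl (fun i _ => ?_)
        field_simp
        rw [sub_div, div_self (hne i)]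
      have hsplit := prod_split (IccM M) Finset.univ (fun i => (ℓ i : ℤ))
        (fun i _ j _ h => hinj h) (fun i _ => mem_IccM_of_val (ℓ i)) (fun k => ξ - (k:ℂ))
      have hQ : Qc M ξ = (∏ i, (ξ - ((ℓ i : ℤ):ℂ))) * ∏ k ∈ DmS M ℓ, (ξ - (k:ℂ)) := by
        unfold Qc
        rw [hsplit]
        congr 1
        apply Finset.prod_congr _ (fun _ _ => rfl)
        ext k
        simp [DmS]
      have hP0 : (∏ i, (ξ - ((ℓ i : ℤ):ℂ))) ≠ 0 :=
        Finset.prod_ne_zero_iff.mpr (fun i _ => hne i)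
      unfold Amf
      rw [hPm, hQ]
      field_simp
  have hterm2 : ∀ ℓ : Config N M, ((configWeight N M w ℓ : ℝ):ℂ) * Apf M ℓ ξ
      = Qc M ξ * (((configWeight N M w ℓ : ℝ):ℂ) *
          ∏ i, (1 + (ξ - ((ℓ i : ℤ):ℂ) - 1)⁻¹)) := by
    intro ℓ
    by_cases hW : configWeight N M w ℓ = 0
    · rw [hW]
      push_cast
      ring
    · have hsm : StrictMono (fun i => (ℓ i : ℤ)) := by
        by_contra hc
        exact hW (by unfold configWeight; rw [if_neg hc]; ring)
      have hinj := hsm.injective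
      have hne1 : ∀ i : Fin N, ξ - ((ℓ i : ℤ):ℂ) - 1 ≠ 0 := by
        intro i
        have hmem : ((ℓ i : ℤ) + 1) ∈ IccM M := by
          have := val_bounds (ℓ i)
          unfold IccM
          rw [Finset.mem_Icc]
          omega
        have h' := hξ _ hmem
        intro hc
        apply h'
        have he : ξ = ((ℓ i : ℤ):ℂ) + 1 := by linear_combination hc
        rw [he]
        push_cast
        try ring_nf
        try rfl
      have hPp : (∏ i, (1 + (ξ - ((ℓ i : ℤ):ℂ) - 1)⁻¹))
          = (∏ i, (ξ - ((ℓ i : ℤ):ℂ))) * (∏ i, (ξ - ((ℓ i : ℤ):ℂ) - 1))⁻¹ := by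
        rw [← Finset.prod_inv_distrib, ← Finset.prod_mul_distrib]
        refine Finset.prod_congr rfl (fun i _ => ?_)
        have := hne1 i
        field_simp
        all_goals ring
      have hsplit := prod_split (IccM M) Finset.univ (fun i => (ℓ i : ℤ) + 1)
        (fun i _ j _ h => hinj (show ((ℓ i : ℤ)) = ((ℓ j : ℤ)) by
          have h' : ((ℓ i : ℤ)) + 1 = ((ℓ j : ℤ)) + 1 := h
          omega))
        (fun i _ => by
          have := val_bounds (ℓ i)
          show ((ℓ i : ℤ) + 1) ∈ IccM M
          unfold IccM
          simp only [Finset.mem_Icc]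
          omega) (fun k => ξ - (k:ℂ))
      have hQ : Qc M ξ = (∏ i, (ξ - ((ℓ i : ℤ):ℂ) - 1)) * ∏ k ∈ DpS M ℓ, (ξ - (k:ℂ)) := by
        unfold Qc
        rw [hsplit]
        congr 1
        · refine Finset.prod_congr rfl (fun i _ => ?_)
          push_cast
          ring
        · apply Finset.prod_congr _ (fun _ _ => rfl)
          ext k
          simp [DpS]
      have hP0 : (∏ i, (ξ - ((ℓ i : ℤ):ℂ) - 1)) ≠ 0 :=
        Finset.prod_ne_zero_iff.mpr (fun i _ => hne1 i)
      unfold Apf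
      rw [hPp, hQ]
      field_simp
  unfold Gf nekrasovR
  rw [Finset.sum_congr rfl (fun ℓ _ => hterm1 ℓ), Finset.sum_congr rfl (fun ℓ _ => hterm2 ℓ),
    ← Finset.mul_sum, ← Finset.mul_sum]
  ring

lemma Gf_diff {𝒩 : Set ℂ} (w : ℤ → ℝ) (φp φm : ℂ → ℂ)
    (hφp : DifferentiableOn ℂ φp 𝒩) (hφm : DifferentiableOn ℂ φm 𝒩) :
    DifferentiableOn ℂ (Gf N M w φp φm) 𝒩 := by
  have hA : Differentiable ℂ
      (fun ξ => ∑ ℓ : Config N M, ((configWeight N M w ℓ : ℝ):ℂ) * Amf M ℓ ξ) := by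
    apply Differentiable.fun_sum
    intro ℓ _
    apply Differentiable.mul (differentiable_const _)
    apply Differentiable.mul
    · apply Differentiable.fun_finsetProd
      intro i _
      exact (differentiable_id.sub_const _).sub_const _
    · apply Differentiable.fun_finsetProd
      intro k _
      exact differentiable_id.sub_const _
  have hB : Differentiable ℂ
      (fun ξ => ∑ ℓ : Config N M, ((configWeight N M w ℓ : ℝ):ℂ) * Apf M ℓ ξ) := by
    apply Differentiable.fun_sum
    intro ℓ _
    apply Differentiable.mul (differentiable_const _)
    apply Differentiable.mul
    · apply Differentiable.fun_finsetProd
      intro i _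
      exact differentiable_id.sub_const _
    · apply Differentiable.fun_finsetProd
      intro k _
      exact differentiable_id.sub_const _
  unfold Gf
  exact (hφm.mul (((differentiable_const _).mul hA).differentiableOn)).add
    (hφp.mul (((differentiable_const _).mul hB).differentiableOn))

end Nek

/-- Nekrasov's equation (θ = 1 case): if `w(x)/w(x-1) = φ⁺(x)/φ⁻(x)` with `φ±`
holomorphic on a neighborhood `𝒩` of `[-1, M+1]`, positive weight on `[0,M]`, and
`φ⁻(0) = φ⁺(M+1) = 0`, then `R_N` extends holomorphically to `𝒩`: all its (possible)
poles at integer points of `[0, M+1]` have vanishing residue. -/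
theorem nekrasov_equation_theta_one (N M : ℕ) (hN : 0 < N) (hNM : N ≤ M)
    (𝒩 : Set ℂ) (h𝒩open : IsOpen 𝒩)
    (h𝒩 : ∀ x : ℝ, x ∈ Set.Icc (-1 : ℝ) ((M : ℝ) + 1) → (x : ℂ) ∈ 𝒩)
    (w : ℤ → ℝ) (φp φm : ℂ → ℂ)
    (hφp : DifferentiableOn ℂ φp 𝒩) (hφm : DifferentiableOn ℂ φm 𝒩)
    (hwpos : ∀ m : ℤ, 0 ≤ m → m ≤ (M : ℤ) → 0 < w m)
    (hwzero : ∀ m : ℤ, m < 0 ∨ (M : ℤ) < m → w m = 0)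
    (hφm0 : φm 0 = 0) (hφpM : φp ((M : ℂ) + 1) = 0)
    (hratio : ∀ m : ℤ, 0 ≤ m → m ≤ (M : ℤ) + 1 →
      (w m : ℂ) * φm ((m : ℤ) : ℂ) = (w (m - 1) : ℂ) * φp ((m : ℤ) : ℂ)) :
    ∃ F : ℂ → ℂ, DifferentiableOn ℂ F 𝒩 ∧
      ∀ ξ ∈ 𝒩, (∀ m : ℤ, 0 ≤ m → m ≤ (M : ℤ) + 1 → ξ ≠ ((m : ℤ) : ℂ)) →
        F ξ = nekrasovR N M w φp φm ξ := by
  classical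
  set pts : List ℂ := (Nek.IccM M).toList.map (fun k : ℤ => ((k:ℤ):ℂ)) with hpts
  have hmem : ∀ a ∈ pts, ∃ k : ℤ, k ∈ Nek.IccM M ∧ a = (k:ℂ) := by
    intro a ha
    rw [hpts, List.mem_map] at ha
    obtain ⟨k, hk, rfl⟩ := ha
    exact ⟨k, Finset.mem_toList.mp hk, rfl⟩
  have hbnd : ∀ k : ℤ, k ∈ Nek.IccM M → (0:ℤ) ≤ k ∧ k ≤ (M:ℤ) + 1 := by
    intro k hk
    unfold Nek.IccM at hk
    rw [Finset.mem_Icc] at hk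
    exact hk
  have hsub : ∀ a ∈ pts, a ∈ 𝒩 := by
    intro a ha
    obtain ⟨k, hk, rfl⟩ := hmem a ha
    have hb := hbnd k hk
    have hx : ((k:ℝ)) ∈ Set.Icc (-1:ℝ) ((M:ℝ)+1) := by
      rw [Set.mem_Icc]
      constructor
      · have h0 : (0:ℝ) ≤ (k:ℝ) := by exact_mod_cast hb.1
        linarith
      · exact_mod_cast hb.2
    have := h𝒩 (k:ℝ) hx
    simpa using this
  have hnd : pts.Nodup := by
    rw [hpts]
    exact (Finset.nodup_toList _).map (fun a b h => by exact_mod_cast h)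
  have hG0 : ∀ a ∈ pts, Nek.Gf N M w φp φm a = 0 := by
    intro a ha
    obtain ⟨k, hk, rfl⟩ := hmem a ha
    exact Nek.G_vanish w φp φm hφm0 hφpM hratio k hk
  refine ⟨Nek.iterD pts (Nek.Gf N M w φp φm),
    Nek.iterD_diff h𝒩open pts _ hsub (Nek.Gf_diff w φp φm hφp hφm), ?_⟩
  intro ξ hξ hne
  have hne' : ∀ k ∈ Nek.IccM M, ξ ≠ (k:ℂ) := by
    intro k hk
    have hb := hbnd k hk
    exact hne k hb.1 hb.2
  have hxp : ξ ∉ pts := by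
    intro hc
    obtain ⟨k, hk, he⟩ := hmem ξ hc
    exact hne' k hk he
  rw [Nek.iterD_eval pts _ hnd hG0 ξ hxp]
  have hprod : (pts.map (fun a => ξ - a)).prod = Nek.Qc M ξ := by
    unfold Nek.Qc
    rw [hpts, List.map_map]
    exact Finset.prod_map_toList _ _
  rw [hprod, ← Nek.QR_eq_G w φp φm ξ hne']
  have hQne : Nek.Qc M ξ ≠ 0 := by
    unfold Nek.Qc
    exact Finset.prod_ne_zero_iff.mpr (fun k hk => sub_ne_zero.mpr (hne' k hk))
  exact mul_div_cancel_left₀ _ hQne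
end
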